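/- (Odd part of the Laguerre-to-Hermite expansion.) For every positive integer m, -2mx · ₂F₃(-(m-1), (1-2m)/2; 3/2, 1, 3/2; x²/4) = Σ_{k=0}^{m-1} ((-2m)_{2k+1} / (2^{2k+1} ((2k+1)!)²)) · ₂F₂((2k+1-2m)/2, (2k+2-2m)/2; (2k+3)/2, (2k+2)/2; 1/4) · H_{2k+1}(x), where the ₂F₂ series terminate. -/

import Mathlib

open Finset

/-- Pochhammer (rising factorial) symbol on the reals. -/
noncomputable def poch (a : ℝ) (n : ℕ) : ℝ := ∏ i ∈ Finset.range n, (a + i)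

/-- Physicists' Hermite polynomial. -/
noncomputable def hermiteP (N : ℕ) (x : ℝ) : ℝ :=
  (N.factorial : ℝ) * ∑ k ∈ Finset.range (N / 2 + 1),
    (-1 : ℝ) ^ k * (2 * x) ^ (N - 2 * k) / ((k.factorial : ℝ) * ((N - 2 * k).factorial : ℝ))

lemma poch_zero (a : ℝ) : poch a 0 = 1 := by simp [poch]

lemma poch_succ (a : ℝ) (n : ℕ) : poch a (n + 1) = poch a n * (a + n) :=
  Finset.prod_range_succ _ _

lemma poch_succ_left (a : ℝ) (n : ℕ) : poch a (n + 1) = a * poch (a + 1) n := by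
  rw [poch, Finset.prod_range_succ']
  simp only [Nat.cast_zero, add_zero, mul_comm]
  congr 1
  · apply Finset.prod_congr rfl
    intro i _
    push_cast
    ring

lemma poch_add (a : ℝ) (n l : ℕ) : poch a (n + l) = poch a n * poch (a + n) l := by
  rw [poch, Finset.prod_range_add]
  congr 1
  apply Finset.prod_congr rfl
  intro i _
  push_cast
  ring

lemma poch_pos {a : ℝ} (ha : 0 < a) (n : ℕ) : 0 < poch a n := by
  apply Finset.prod_pos
  intro i _
  positivity

lemma poch_one (n : ℕ) : poch 1 n = n.factorial := by
  induction n with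
  | zero => simp [poch_zero]
  | succ n ih =>
    rw [poch_succ, ih, Nat.factorial_succ]
    push_cast
    ring

lemma poch_doubling (a : ℝ) (n : ℕ) :
    poch (2 * a) (2 * n) = 4 ^ n * poch a n * poch (a + 1 / 2) n := by
  induction n with
  | zero => simp [poch_zero]
  | succ n ih =>
    have : 2 * (n + 1) = 2 * n + 1 + 1 := by ring
    rw [this, poch_succ, poch_succ, ih, poch_succ, poch_succ]
    push_cast
    ring

lemma fact_odd (n : ℕ) : (((2 * n + 1).factorial : ℝ)) = 4 ^ n * n.factorial * poch (3 / 2) n := by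
  induction n with
  | zero => simp [poch_zero]
  | succ n ih =>
    have h : 2 * (n + 1) + 1 = (2 * n + 1) + 1 + 1 := by ring
    rw [h, Nat.factorial_succ, Nat.factorial_succ, Nat.cast_mul, Nat.cast_mul, ih, poch_succ,
      Nat.factorial_succ]
    push_cast
    ring

lemma alt_sum (n : ℕ) :
    (∑ l ∈ Finset.range (n + 1), (-1 : ℝ) ^ l / (((n - l).factorial : ℝ) * (l.factorial : ℝ)))
      = if n = 0 then 1 else 0 := by
  have key : ∀ l ∈ Finset.range (n + 1),
      (-1 : ℝ) ^ l / (((n - l).factorial : ℝ) * (l.factorial : ℝ))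
        = ((-1 : ℝ) ^ l * (n.choose l : ℝ)) / (n.factorial : ℝ) := by
    intro l hl
    have hln : l ≤ n := Nat.lt_succ_iff.mp (Finset.mem_range.mp hl)
    have h := Nat.choose_mul_factorial_mul_factorial hln
    have h2 : ((n.choose l : ℝ)) * (l.factorial : ℝ) * ((n - l).factorial : ℝ)
        = (n.factorial : ℝ) := by exact_mod_cast congrArg (Nat.cast (R := ℝ)) h
    have hl0 : ((l.factorial : ℝ)) ≠ 0 := Nat.cast_ne_zero.mpr l.factorial_ne_zero
    have hnl0 : (((n - l).factorial : ℝ)) ≠ 0 := Nat.cast_ne_zero.mpr (n - l).factorial_ne_zero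
    have hn0 : ((n.factorial : ℝ)) ≠ 0 := Nat.cast_ne_zero.mpr n.factorial_ne_zero
    field_simp
    linear_combination -h2
  rw [Finset.sum_congr rfl key, ← Finset.sum_div]
  have : (∑ l ∈ Finset.range (n + 1), (-1 : ℝ) ^ l * (n.choose l : ℝ))
      = ((if n = 0 then 1 else 0 : ℤ) : ℝ) := by
    rw [← Int.alternating_sum_range_choose]
    push_cast
    rfl
  rw [this]
  by_cases h : n = 0 <;> simp [h]

lemma hermite_odd (k : ℕ) (x : ℝ) :
    hermiteP (2 * k + 1) x = ((2 * k + 1).factorial : ℝ) *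
      ∑ l ∈ Finset.range (k + 1),
        (-1 : ℝ) ^ l * (2 * x) ^ (2 * (k - l) + 1) /
          ((l.factorial : ℝ) * (((2 * (k - l) + 1).factorial : ℝ))) := by
  rw [hermiteP]
  have hdiv : (2 * k + 1) / 2 + 1 = k + 1 := by omega
  rw [hdiv]
  congr 1
  apply Finset.sum_congr rfl
  intro l hl
  have hlk : l ≤ k := Nat.lt_succ_iff.mp (Finset.mem_range.mp hl)
  have : 2 * k + 1 - 2 * l = 2 * (k - l) + 1 := by omega
  rw [this]

lemma inv_hermite (s : ℕ) (x : ℝ) :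
    (∑ k ∈ Finset.range (s + 1),
      ((2 * s + 1).factorial : ℝ) /
          (2 ^ (2 * s + 1) * ((s - k).factorial : ℝ) * ((2 * k + 1).factorial : ℝ)) *
        hermiteP (2 * k + 1) x) = x ^ (2 * s + 1) := by
  have key : ∀ k ∈ Finset.range (s + 1),
      ((2 * s + 1).factorial : ℝ) /
          (2 ^ (2 * s + 1) * ((s - k).factorial : ℝ) * ((2 * k + 1).factorial : ℝ)) *
        hermiteP (2 * k + 1) x
      = ∑ r ∈ Finset.range (k + 1),
          ((2 * s + 1).factorial : ℝ) * ((-1 : ℝ) ^ (k - r) * (2 * x) ^ (2 * r + 1)) /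
            (2 ^ (2 * s + 1) * ((s - k).factorial : ℝ) * ((k - r).factorial : ℝ) *
              ((2 * r + 1).factorial : ℝ)) := by
    intro k hk
    rw [hermite_odd, ← mul_assoc, Finset.mul_sum]
    rw [← Finset.sum_range_reflect (fun r => ((2 * s + 1).factorial : ℝ) *
      ((-1 : ℝ) ^ (k - r) * (2 * x) ^ (2 * r + 1)) /
      (2 ^ (2 * s + 1) * ((s - k).factorial : ℝ) * ((k - r).factorial : ℝ) *
        ((2 * r + 1).factorial : ℝ))) (k + 1)]
    apply Finset.sum_congr rfl
    intro l hl
    have hlk : l ≤ k := Nat.lt_succ_iff.mp (Finset.mem_range.mp hl)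
    have h1 : k + 1 - 1 - l = k - l := by omega
    have h2 : k - (k - l) = l := by omega
    simp only [h1, h2]
    have e1 : (((2 * k + 1).factorial : ℝ)) ≠ 0 := Nat.cast_ne_zero.mpr (Nat.factorial_ne_zero _)
    have e2 : ((l.factorial : ℝ)) ≠ 0 := Nat.cast_ne_zero.mpr (Nat.factorial_ne_zero _)
    have e3 : (((2 * (k - l) + 1).factorial : ℝ)) ≠ 0 :=
      Nat.cast_ne_zero.mpr (Nat.factorial_ne_zero _)
    have e4 : (((s - k).factorial : ℝ)) ≠ 0 := Nat.cast_ne_zero.mpr (Nat.factorial_ne_zero _)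
    field_simp
  rw [Finset.sum_congr rfl key]
  simp only [Finset.range_eq_Ico]
  rw [show (∑ k ∈ Finset.Ico 0 (s + 1), ∑ r ∈ Finset.Ico 0 (k + 1),
      ((2 * s + 1).factorial : ℝ) * ((-1 : ℝ) ^ (k - r) * (2 * x) ^ (2 * r + 1)) /
        (2 ^ (2 * s + 1) * ((s - k).factorial : ℝ) * ((k - r).factorial : ℝ) *
          ((2 * r + 1).factorial : ℝ)))
    = ∑ r ∈ Finset.Ico 0 (s + 1), ∑ k ∈ Finset.Ico r (s + 1),
      ((2 * s + 1).factorial : ℝ) * ((-1 : ℝ) ^ (k - r) * (2 * x) ^ (2 * r + 1)) /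
        (2 ^ (2 * s + 1) * ((s - k).factorial : ℝ) * ((k - r).factorial : ℝ) *
          ((2 * r + 1).factorial : ℝ)) from
    (Finset.sum_Ico_Ico_comm 0 (s + 1) _).symm]
  have inner : ∀ r ∈ Finset.Ico 0 (s + 1),
      (∑ k ∈ Finset.Ico r (s + 1),
        ((2 * s + 1).factorial : ℝ) * ((-1 : ℝ) ^ (k - r) * (2 * x) ^ (2 * r + 1)) /
          (2 ^ (2 * s + 1) * ((s - k).factorial : ℝ) * ((k - r).factorial : ℝ) *
            ((2 * r + 1).factorial : ℝ)))
      = (((2 * s + 1).factorial : ℝ) * (2 * x) ^ (2 * r + 1) /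
          (2 ^ (2 * s + 1) * ((2 * r + 1).factorial : ℝ))) *
        (if s - r = 0 then 1 else 0) := by
    intro r hr
    have hrs : r ≤ s := by
      have := (Finset.mem_Ico.mp hr).2; omega
    rw [Finset.sum_Ico_eq_sum_range]
    have hsr : s + 1 - r = (s - r) + 1 := by omega
    rw [hsr, ← alt_sum (s - r), Finset.mul_sum]
    apply Finset.sum_congr rfl
    intro l hl
    have h1 : r + l - r = l := by omega
    have h2 : s - (r + l) = s - r - l := by omega
    simp only [h1, h2]
    ring
  rw [Finset.sum_congr rfl inner]
  rw [Finset.sum_eq_single_of_mem s (by simp)]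
  · have : s - s = 0 := by omega
    rw [this, if_pos rfl]
    have e1 : (((2 * s + 1).factorial : ℝ)) ≠ 0 := Nat.cast_ne_zero.mpr (Nat.factorial_ne_zero _)
    rw [mul_one, mul_pow]
    field_simp
  · intro r hr hrs
    have : s - r ≠ 0 := by
      have := (Finset.mem_Ico.mp hr).2; omega
    rw [if_neg this, mul_zero]

lemma lhs_term (m s : ℕ) (x : ℝ) :
    -2 * (m : ℝ) * x *
      (poch (-((m : ℝ) - 1)) s * poch ((1 - 2 * (m : ℝ)) / 2) s * (x ^ 2 / 4) ^ s /
        (poch (3 / 2) s * poch 1 s * poch (3 / 2) s * (s.factorial : ℝ)))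
    = poch (-2 * (m : ℝ)) (2 * s + 1) / ((((2 * s + 1).factorial : ℝ)) ^ 2) * x ^ (2 * s + 1) := by
  have h1 : poch (-2 * (m : ℝ)) (2 * s + 1)
      = (-2 * (m : ℝ)) * poch (2 * ((1 - 2 * (m : ℝ)) / 2)) (2 * s) := by
    rw [poch_succ_left]
    congr 1
    ring
  have h2 : ((1 - 2 * (m : ℝ)) / 2) + 1 / 2 = -((m : ℝ) - 1) := by ring
  rw [h1, poch_doubling, h2, fact_odd, poch_one]
  have hp : (0 : ℝ) < poch (3 / 2) s := poch_pos (by norm_num) s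
  have hs : ((s.factorial : ℝ)) ≠ 0 := Nat.cast_ne_zero.mpr (Nat.factorial_ne_zero _)
  have h4 : (4 : ℝ) ^ s ≠ 0 := by positivity
  field_simp
  rw [mul_assoc _ ((x ^ 2 / 4 : ℝ) ^ s), ← mul_pow]
  ring

lemma rhs_term (m k j : ℕ) :
    (poch (-2 * (m : ℝ)) (2 * k + 1) / (2 ^ (2 * k + 1) * (((2 * k + 1).factorial : ℝ)) ^ 2)) *
    (poch ((2 * (k : ℝ) + 1 - 2 * m) / 2) j * poch ((2 * (k : ℝ) + 2 - 2 * m) / 2) j *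
        (1 / 4 : ℝ) ^ j /
      (poch ((2 * (k : ℝ) + 3) / 2) j * poch ((2 * (k : ℝ) + 2) / 2) j * (j.factorial : ℝ)))
    = (poch (-2 * (m : ℝ)) (2 * (k + j) + 1) / ((((2 * (k + j) + 1).factorial : ℝ)) ^ 2)) *
      ((((2 * (k + j) + 1).factorial : ℝ)) /
        (2 ^ (2 * (k + j) + 1) * (j.factorial : ℝ) * (((2 * k + 1).factorial : ℝ)))) := by
  have hsplit : poch (-2 * (m : ℝ)) (2 * (k + j) + 1)
      = poch (-2 * (m : ℝ)) (2 * k + 1) *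
        (4 ^ j * poch ((2 * (k : ℝ) + 1 - 2 * m) / 2) j *
          poch ((2 * (k : ℝ) + 1 - 2 * m) / 2 + 1 / 2) j) := by
    rw [show 2 * (k + j) + 1 = (2 * k + 1) + 2 * j by ring, poch_add]
    congr 1
    rw [show (-2 * (m : ℝ) + ((2 * k + 1 : ℕ) : ℝ)) = 2 * ((2 * (k : ℝ) + 1 - 2 * m) / 2) by
      push_cast; ring, poch_doubling]
  have hfac : (((2 * (k + j) + 1).factorial : ℝ))
      = (((2 * k + 1).factorial : ℝ)) *
        (4 ^ j * poch ((k : ℝ) + 1) j * poch ((k : ℝ) + 1 + 1 / 2) j) := by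
    rw [← poch_one (2 * (k + j) + 1), show 2 * (k + j) + 1 = (2 * k + 1) + 2 * j by ring,
      poch_add, poch_one]
    congr 1
    rw [show ((1 : ℝ) + ((2 * k + 1 : ℕ) : ℝ)) = 2 * ((k : ℝ) + 1) by push_cast; ring,
      poch_doubling]
  have ha2 : ((2 * (k : ℝ) + 1 - 2 * m) / 2 + 1 / 2) = (2 * (k : ℝ) + 2 - 2 * m) / 2 := by ring
  have hb1 : ((2 * (k : ℝ) + 2) / 2) = (k : ℝ) + 1 := by ring
  have hb2 : ((2 * (k : ℝ) + 3) / 2) = (k : ℝ) + 1 + 1 / 2 := by ring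
  rw [hsplit, hfac, ha2, hb1, hb2]
  have p1 : (0 : ℝ) < poch ((k : ℝ) + 1) j := poch_pos (by positivity) j
  have p2 : (0 : ℝ) < poch ((k : ℝ) + 1 + 1 / 2) j := poch_pos (by positivity) j
  have e1 : (((2 * k + 1).factorial : ℝ)) ≠ 0 := Nat.cast_ne_zero.mpr (Nat.factorial_ne_zero _)
  have e2 : ((j.factorial : ℝ)) ≠ 0 := Nat.cast_ne_zero.mpr (Nat.factorial_ne_zero _)
  have q1 : (4 : ℝ) ^ j = 2 ^ (2 * j) := by
    rw [show (4 : ℝ) = 2 ^ 2 by norm_num, ← pow_mul]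
  have q2 : (2 : ℝ) ^ (2 * (k + j) + 1) = 2 ^ (2 * k + 1) * 2 ^ (2 * j) := by
    rw [← pow_add]; congr 1; ring
  have q3 : (2 : ℝ) ^ (2 * j) ≠ 0 := by positivity
  have q4 : (2 : ℝ) ^ (2 * k + 1) ≠ 0 := by positivity
  have p1' : poch ((k : ℝ) + 1) j ≠ 0 := ne_of_gt p1
  have p2' : poch ((k : ℝ) + 1 + 1 / 2) j ≠ 0 := ne_of_gt p2
  rw [show ((1 / 4 : ℝ)) ^ j = 1 / 4 ^ j by rw [div_pow, one_pow], mul_one_div, div_div,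
    q1, q2]
  rw [div_mul_div_comm, div_mul_div_comm, div_eq_div_iff]
  · ring
  · exact mul_ne_zero (mul_ne_zero q4 (pow_ne_zero 2 e1))
      (mul_ne_zero q3 (mul_ne_zero (mul_ne_zero p2' p1') e2))
  · exact mul_ne_zero (pow_ne_zero 2 (mul_ne_zero e1 (mul_ne_zero (mul_ne_zero q3 p1') p2')))
      (mul_ne_zero (mul_ne_zero (mul_ne_zero q4 q3) e2) e1)

/-- Odd part of the Laguerre-to-Hermite expansion. -/
theorem odd_part_laguerre_to_hermite (m : ℕ) (hm : 0 < m) (x : ℝ) :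
    (-2 * (m : ℝ) * x *
      ∑ s ∈ Finset.range m,
        poch (-((m : ℝ) - 1)) s * poch ((1 - 2 * (m : ℝ)) / 2) s * (x ^ 2 / 4) ^ s /
          (poch (3 / 2) s * poch 1 s * poch (3 / 2) s * (s.factorial : ℝ))) =
      ∑ k ∈ Finset.range m,
        (poch (-2 * (m : ℝ)) (2 * k + 1) / (2 ^ (2 * k + 1) * (((2 * k + 1).factorial : ℝ)) ^ 2)) *
        (∑ j ∈ Finset.range (m - k),
          poch ((2 * (k : ℝ) + 1 - 2 * m) / 2) j * poch ((2 * (k : ℝ) + 2 - 2 * m) / 2) j *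
            (1 / 4 : ℝ) ^ j /
          (poch ((2 * (k : ℝ) + 3) / 2) j * poch ((2 * (k : ℝ) + 2) / 2) j * (j.factorial : ℝ))) *
        hermiteP (2 * k + 1) x := by

  rw [Finset.mul_sum]
  rw [Finset.sum_congr rfl (fun s _ => lhs_term m s x)]
  symm
  have hk : ∀ k ∈ Finset.range m,
      (poch (-2 * (m : ℝ)) (2 * k + 1) / (2 ^ (2 * k + 1) * (((2 * k + 1).factorial : ℝ)) ^ 2)) *
        (∑ j ∈ Finset.range (m - k),
          poch ((2 * (k : ℝ) + 1 - 2 * m) / 2) j * poch ((2 * (k : ℝ) + 2 - 2 * m) / 2) j *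
            (1 / 4 : ℝ) ^ j /
          (poch ((2 * (k : ℝ) + 3) / 2) j * poch ((2 * (k : ℝ) + 2) / 2) j * (j.factorial : ℝ))) *
        hermiteP (2 * k + 1) x
      = ∑ s ∈ Finset.Ico k m,
          poch (-2 * (m : ℝ)) (2 * s + 1) / ((((2 * s + 1).factorial : ℝ)) ^ 2) *
            (((2 * s + 1).factorial : ℝ) /
                (2 ^ (2 * s + 1) * ((s - k).factorial : ℝ) * ((2 * k + 1).factorial : ℝ)) *
              hermiteP (2 * k + 1) x) := by
    intro k hkm
    rw [Finset.mul_sum, Finset.sum_mul, Finset.sum_Ico_eq_sum_range]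
    apply Finset.sum_congr rfl
    intro j hj
    have h2 : k + j - k = j := by omega
    rw [h2, rhs_term m k j]
    ring
  rw [Finset.sum_congr rfl hk, Finset.range_eq_Ico, Finset.sum_Ico_Ico_comm]
  apply Finset.sum_congr rfl
  intro s hs
  rw [show Finset.Ico 0 (s + 1) = Finset.range (s + 1) from by rw [Finset.range_eq_Ico],
    ← Finset.mul_sum, inv_hermite]
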